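/- Let ω be a real-valued random variable with E|ω| < ∞ and let x ∈ ℝ satisfy P(ω = x) = 0. Then the complementary first order loss function y ↦ L̂(y, ω) is differentiable at x, with derivative equal to P(ω ≤ x). -/

import Mathlib

open MeasureTheory

/-- If `P(ω = x) = 0`, then the complementary first order loss
function `y ↦ E[max (y - ω) 0]` is differentiable at `x` with derivative
`P(ω ≤ x)`. -/
theorem complementary_loss_hasDerivAt
    {Ω : Type*} [MeasurableSpace Ω] (μ : Measure Ω) [IsProbabilityMeasure μ]
    (X : Ω → ℝ) (hXmeas : Measurable X) (hXint : Integrable X μ)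
    (x : ℝ) (hx : μ {a | X a = x} = 0) :
    HasDerivAt (fun y : ℝ => ∫ a, max (y - X a) 0 ∂μ) (μ {a | X a ≤ x}).toReal x := by
  set F : ℝ → Ω → ℝ := fun y a => max (y - X a) 0 with hF
  set F' : Ω → ℝ := fun a => Set.indicator {a | X a < x} (fun _ => (1:ℝ)) a with hF'
  have hslt : MeasurableSet {a | X a < x} := hXmeas measurableSet_Iio
  have key := hasDerivAt_integral_of_dominated_loc_of_lip (F := F) (F' := F') (μ := μ)
      (x₀ := x) (bound := fun _ => (1:ℝ)) (Metric.ball_mem_nhds x one_pos)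
      (Filter.Eventually.of_forall fun y =>
        ((hXmeas.const_sub y).max measurable_const).aestronglyMeasurable)
      (((integrable_const x).sub hXint).pos_part)
      ((measurable_const.indicator hslt).aestronglyMeasurable)
      (Filter.Eventually.of_forall fun a => by
        have h1 : LipschitzWith 1 (fun y : ℝ => y - X a) :=
          LipschitzWith.of_dist_le_mul (fun u v => by
            simp [Real.dist_eq, sub_sub_sub_cancel_right])
        have h2 : LipschitzWith 1 (F · a) := by
          simpa [hF] using h1.max_const 0
        show LipschitzOnWith (Real.nnabs (1:ℝ)) (F · a) (Metric.ball x 1)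
        rw [map_one]
        exact fun y _ z _ => h2 y z)
      (integrable_const 1)
      ?_
  · have heq : (μ {a | X a ≤ x}).toReal = ∫ a, F' a ∂μ := by
      rw [hF', MeasureTheory.integral_indicator_const (1:ℝ) hslt]
      have hset : {a | X a ≤ x} = {a | X a < x} ∪ {a | X a = x} := by
        ext a; simp [Set.mem_setOf_eq, le_iff_lt_or_eq]
      have hmeq : μ {a | X a ≤ x} = μ {a | X a < x} := by
        refine le_antisymm ?_ (measure_mono fun a (ha : X a < x) => show X a ≤ x from le_of_lt ha)
        calc μ {a | X a ≤ x} ≤ μ {a | X a < x} + μ {a | X a = x} :=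
              hset ▸ measure_union_le _ _
          _ = μ {a | X a < x} := by rw [hx, add_zero]
      rw [hmeq]
      simp [Measure.real]
    rw [heq]
    exact key.2
  · have hae : ∀ᵐ a ∂μ, X a ≠ x := by
      rw [ae_iff]; simpa using hx
    filter_upwards [hae] with a ha
    rcases ha.lt_or_gt with h | h
    · -- X a < x : F' a = 1, function is y - X a near x
      have hone : F' a = 1 := by simp [hF', Set.indicator_of_mem, h]
      rw [hone]
      have hev : ∀ᶠ y in nhds x, F y a = y - X a := by
        filter_upwards [Ioi_mem_nhds h] with y hy
        simp [hF, max_eq_left (sub_nonneg.2 (le_of_lt (Set.mem_Ioi.mp hy)))]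
      exact ((hasDerivAt_id x).sub_const (X a)).congr_of_eventuallyEq hev
    · -- x < X a : F' a = 0, function is 0 near x
      have hzero : F' a = 0 := by
        simp [hF', Set.indicator_of_notMem, not_lt.2 h.le]
      rw [hzero]
      have hev : ∀ᶠ y in nhds x, F y a = 0 := by
        filter_upwards [Iio_mem_nhds h] with y hy
        simp [hF, max_eq_right (sub_nonpos.2 (le_of_lt (Set.mem_Iio.mp hy)))]
      exact (hasDerivAt_const x (0:ℝ)).congr_of_eventuallyEq hev
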